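/- Let E be a measurable space, ℓ, N natural numbers with N ≥ 2ℓ ≥ 2, φ : E^ℓ → ℝ a bounded measurable function, and f^N a Borel probability measure on E^N that is symmetric (invariant under permutations of the N coordinates). Then | ∫_{E^N} ⟨(μ^N_V)^{⊗ℓ}, φ⟩ df^N(V) − ∫_{E^N} φ(v_1,…,v_ℓ) df^N(V) | ≤ 2ℓ²‖φ‖_∞/N, where ⟨(μ^N_V)^{⊗ℓ}, φ⟩ := N^{−ℓ} Σ_{(i_1,…,i_ℓ) ∈ {1,…,N}^ℓ} φ(v_{i_1},…,v_{i_ℓ}). -/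

import Mathlib

open MeasureTheory Filter
open scoped ENNReal BigOperators Topology

noncomputable section

lemma stmt11_count_aux (N : ℕ) : ∀ k : ℕ, ((N:ℝ)^k - N.descFactorial k) * N ≤ (k:ℝ)^2 * N^k := by
  intro k
  induction k with
  | zero => simp
  | succ k ih =>
    have hdesc : (N.descFactorial k : ℝ) ≤ (N:ℝ)^k := by
      exact_mod_cast Nat.descFactorial_le_pow N k
    rcases le_or_gt k N with hk | hk
    · have hcast : (N.descFactorial (k+1) : ℝ) = ((N:ℝ) - k) * N.descFactorial k := by
        rw [Nat.descFactorial_succ]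
        push_cast [Nat.cast_sub hk]
        ring
      have hNpos : (0:ℝ) ≤ (N:ℝ) := Nat.cast_nonneg N
      have hpow : (0:ℝ) ≤ (N:ℝ)^k := by positivity
      have hkn : (0:ℝ) ≤ (k:ℝ) := Nat.cast_nonneg k
      rw [hcast]
      have e1 : ((N:ℝ)^(k+1) - ((N:ℝ) - k) * N.descFactorial k) * N
          = (N:ℝ) * (((N:ℝ)^k - N.descFactorial k) * N) + (k:ℝ) * N.descFactorial k * N := by
        ring
      rw [e1]
      calc (N:ℝ) * (((N:ℝ)^k - N.descFactorial k) * N) + (k:ℝ) * N.descFactorial k * N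
          ≤ (N:ℝ) * ((k:ℝ)^2 * N^k) + (k:ℝ) * N^k * N := by
            gcongr
        _ = ((k:ℝ)^2 + k) * N^(k+1) := by ring
        _ ≤ ((k:ℝ)+1)^2 * N^(k+1) := by
            have : (0:ℝ) ≤ (N:ℝ)^(k+1) := by positivity
            nlinarith
      push_cast
      linarith [le_refl (0:ℝ)]
    · have h1 : N.descFactorial k = 0 := (Nat.descFactorial_eq_zero_iff_lt).2 hk
      have h2 : N.descFactorial (k+1) = 0 := (Nat.descFactorial_eq_zero_iff_lt).2 (by omega)
      rw [h1, h2] at *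
      simp only [Nat.cast_zero, sub_zero]
      have hNk : (N:ℝ) ≤ (k:ℝ) + 1 := by exact_mod_cast Nat.le_of_lt (by omega)
      have hpow : (0:ℝ) ≤ (N:ℝ)^(k+1) := by positivity
      push_cast
      nlinarith [sq_nonneg ((k:ℝ)+1), Nat.cast_nonneg (α := ℝ) k]

lemma stmt11_sym {E : Type*} [MeasurableSpace E] {ℓ N : ℕ} (hN : ℓ ≤ N)
    (φ : (Fin ℓ → E) → ℝ) (hφm : Measurable φ)
    (fN : Measure (Fin N → E))
    (hsym : ∀ σ : Equiv.Perm (Fin N), fN.map (fun V => V ∘ σ) = fN)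
    (g : Fin ℓ → Fin N) (hg : Function.Injective g) :
    ∫ V, φ (fun i => V (g i)) ∂fN = ∫ V, φ (fun i => V (Fin.castLE hN i)) ∂fN := by
  classical
  set h0 : Fin ℓ → Fin N := Fin.castLE hN with hh0
  have h0inj : Function.Injective h0 := Fin.castLE_injective hN
  set e : {x // x ∈ Set.range h0} ≃ {x // x ∈ Set.range g} :=
    (Equiv.ofInjective h0 h0inj).symm.trans (Equiv.ofInjective g hg) with he
  set σ : Equiv.Perm (Fin N) := e.extendSubtype with hσdef
  have hσ : ∀ i, σ (h0 i) = g i := by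
    intro i
    rw [hσdef, Equiv.extendSubtype_apply_of_mem e (h0 i) ⟨i, rfl⟩]
    simp [he]
  have hmg : Measurable (fun V : Fin N → E => φ (fun i => V (h0 i))) :=
    hφm.comp (measurable_pi_lambda _ fun i => measurable_pi_apply _)
  calc ∫ V, φ (fun i => V (g i)) ∂fN
      = ∫ V, φ (fun i => (V ∘ σ) (h0 i)) ∂fN := by
        simp only [Function.comp_apply, hσ]
    _ = ∫ W, φ (fun i => W (h0 i)) ∂(fN.map (fun V => V ∘ σ)) := by
        have hTm : Measurable (fun V : Fin N → E => V ∘ σ) :=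
          measurable_pi_lambda _ fun j => measurable_pi_apply _
        rw [integral_map (φ := fun V : Fin N → E => V ∘ σ) hTm.aemeasurable
          hmg.aestronglyMeasurable]
    _ = ∫ V, φ (fun i => V (h0 i)) ∂fN := by rw [hsym σ]

theorem stmt11 {E : Type*} [MeasurableSpace E] (ℓ N : ℕ) (hℓ : 1 ≤ ℓ) (hN : 2 * ℓ ≤ N)
    (φ : (Fin ℓ → E) → ℝ) (hφm : Measurable φ) (B : ℝ) (hB : ∀ x, |φ x| ≤ B)
    (fN : Measure (Fin N → E)) (hfN : IsProbabilityMeasure fN)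
    (hsym : ∀ σ : Equiv.Perm (Fin N), fN.map (fun V => V ∘ σ) = fN) :
    |(∫ V, ((N : ℝ) ^ ℓ)⁻¹ * ∑ g : Fin ℓ → Fin N, φ (fun i => V (g i)) ∂fN)
      - ∫ V, φ (fun i => V (Fin.castLE (by omega) i)) ∂fN|
      ≤ 2 * (ℓ : ℝ) ^ 2 * B / N := by
  classical
  have hℓN : ℓ ≤ N := by omega
  have hNpos : 0 < N := by omega
  -- E is nonempty
  have hEne : Nonempty E := by
    by_contra hE
    have : IsEmpty (Fin N → E) := by
      simp only [not_nonempty_iff] at hE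
      exact ⟨fun f => (hE.false (f ⟨0, hNpos⟩))⟩
    have h1 := measure_univ (μ := fN)
    rw [Set.univ_eq_empty_iff.2 this] at h1
    simp at h1
  have hB0 : 0 ≤ B := le_trans (abs_nonneg _) (hB (fun _ => Classical.arbitrary E))
  -- basic measurability / integrability
  have hmg : ∀ g : Fin ℓ → Fin N, Measurable (fun V : Fin N → E => φ (fun i => V (g i))) :=
    fun g => hφm.comp (measurable_pi_lambda _ fun i => measurable_pi_apply _)
  have hint : ∀ g : Fin ℓ → Fin N, Integrable (fun V => φ (fun i => V (g i))) fN := fun g =>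
    (integrable_const B).mono' (hmg g).aestronglyMeasurable
      (ae_of_all _ fun V => by simpa using hB _)
  have habs : ∀ g : Fin ℓ → Fin N, |∫ V, φ (fun i => V (g i)) ∂fN| ≤ B := fun g => by
    have := norm_integral_le_of_norm_le_const (μ := fN) (C := B)
      (f := fun V => φ (fun i => V (g i))) (ae_of_all _ fun V => by simpa using hB _)
    simpa [measure_univ] using this
  set I : (Fin ℓ → Fin N) → ℝ := fun g => ∫ V, φ (fun i => V (g i)) ∂fN with hI
  set I0 : ℝ := ∫ V, φ (fun i => V (Fin.castLE hℓN i)) ∂fN with hI0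
  have hI0abs : |I0| ≤ B := habs _
  -- rewrite first integral
  have hstep1 : (∫ V, ((N : ℝ) ^ ℓ)⁻¹ * ∑ g : Fin ℓ → Fin N, φ (fun i => V (g i)) ∂fN)
      = ((N : ℝ) ^ ℓ)⁻¹ * ∑ g : Fin ℓ → Fin N, I g := by
    rw [integral_const_mul, integral_finset_sum _ (fun g _ => hint g)]
  rw [hstep1]
  have hcard : Fintype.card (Fin ℓ → Fin N) = N ^ ℓ := by
    simp [Fintype.card_fun]
  have hNl : (0:ℝ) < (N:ℝ) ^ ℓ := by positivity
  have hdiff : ((N : ℝ) ^ ℓ)⁻¹ * ∑ g : Fin ℓ → Fin N, I g - I0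
      = ((N : ℝ) ^ ℓ)⁻¹ * ∑ g : Fin ℓ → Fin N, (I g - I0) := by
    rw [Finset.sum_sub_distrib, Finset.sum_const]
    simp only [Finset.card_univ, hcard, nsmul_eq_mul]
    field_simp
    push_cast
    ring
  rw [hdiff]
  -- injective terms vanish
  have hinjzero : ∀ g : Fin ℓ → Fin N, Function.Injective g → I g - I0 = 0 := by
    intro g hg
    have h : I g = I0 := stmt11_sym hℓN φ hφm fN hsym g hg
    rw [h, sub_self]
  set s : Finset (Fin ℓ → Fin N) := Finset.univ.filter (fun g => ¬ Function.Injective g) with hs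
  have hsum : ∑ g : Fin ℓ → Fin N, (I g - I0) = ∑ g ∈ s, (I g - I0) := by
    rw [hs, Finset.sum_filter_of_ne]
    intro g _ hne
    exact fun hginj => hne (hinjzero g hginj)
  rw [hsum]
  -- count the non-injective functions
  have hcardinj : (Finset.univ.filter (fun g : Fin ℓ → Fin N => Function.Injective g)).card
      = N.descFactorial ℓ := by
    rw [← Fintype.card_subtype]
    rw [Fintype.card_congr (Equiv.subtypeInjectiveEquivEmbedding (Fin ℓ) (Fin N))]
    simp [Fintype.card_embedding_eq]
  have hscard : s.card = N ^ ℓ - N.descFactorial ℓ := by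
    have h2 := Finset.card_filter_add_card_filter_not
      (s := (Finset.univ : Finset (Fin ℓ → Fin N)))
      (p := fun g => Function.Injective g)
    rw [Finset.card_univ, hcard, hcardinj] at h2
    have h3 : (Finset.univ.filter (fun g : Fin ℓ → Fin N => ¬ Function.Injective g)).card = s.card := by
      rw [hs]
    omega
  have hdescle : N.descFactorial ℓ ≤ N ^ ℓ := Nat.descFactorial_le_pow N ℓ
  have hscardR : (s.card : ℝ) = (N:ℝ) ^ ℓ - N.descFactorial ℓ := by
    rw [hscard, Nat.cast_sub hdescle]
    push_cast
    ring
  -- bound the sum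
  have hbound : |∑ g ∈ s, (I g - I0)| ≤ (s.card : ℝ) * (2 * B) := by
    calc |∑ g ∈ s, (I g - I0)| ≤ ∑ g ∈ s, |I g - I0| := Finset.abs_sum_le_sum_abs _ _
      _ ≤ ∑ _g ∈ s, (2 * B) := by
          apply Finset.sum_le_sum
          intro g _
          calc |I g - I0| ≤ |I g| + |I0| := abs_sub _ _
            _ ≤ B + B := add_le_add (habs g) hI0abs
            _ = 2 * B := by ring
      _ = (s.card : ℝ) * (2 * B) := by rw [Finset.sum_const, nsmul_eq_mul]
  have hkey := stmt11_count_aux N ℓ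
  -- final computation
  rw [abs_mul, abs_inv, abs_pow, Nat.abs_cast]
  have h1 : ((N:ℝ) ^ ℓ)⁻¹ * |∑ g ∈ s, (I g - I0)| ≤ ((N:ℝ) ^ ℓ)⁻¹ * ((s.card : ℝ) * (2 * B)) := by
    gcongr
  refine h1.trans ?_
  rw [hscardR]
  have hNR : (0:ℝ) < (N:ℝ) := by exact_mod_cast hNpos
  rw [inv_mul_eq_div, div_le_div_iff₀ hNl hNR]
  nlinarith [hkey, hB0, mul_le_mul_of_nonneg_left hkey hB0]
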